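/- Let T : [0,∞) → [0,∞) be differentiable with T' ≥ 0 and T'' ≥ 0, and let λᵢ ≥ λⱼ > 0. Define gₖ(C) = 1 - 1/(1 + λₖ·T(C)). If gⱼ''(C) < 0 at some point C, then gᵢ''(C) < 0 at that point. -/

import Mathlib

lemma fifo_second_deriv (T T' T'' : ℝ → ℝ)
    (hT : ∀ x, HasDerivAt T (T' x) x)
    (hT' : ∀ x, HasDerivAt T' (T'' x) x)
    (lam : ℝ) (C : ℝ) (hD : 0 < 1 + lam * T C) :
    deriv (deriv (fun x => 1 - 1 / (1 + lam * T x))) C =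
      lam * T'' C / (1 + lam * T C) ^ 2
        - 2 * lam ^ 2 * (T' C) ^ 2 / (1 + lam * T C) ^ 3 := by
  have hcont : Continuous fun x => 1 + lam * T x := by
    have : Continuous T := fun_prop_aux T hT
    fun_prop
  have hU : IsOpen {x : ℝ | 0 < 1 + lam * T x} := isOpen_lt continuous_const hcont
  have hmem : {x : ℝ | 0 < 1 + lam * T x} ∈ nhds C := hU.mem_nhds hD
  have hderiv1 : ∀ x, 0 < 1 + lam * T x →
      HasDerivAt (fun x => 1 - 1 / (1 + lam * T x))
        (lam * T' x / (1 + lam * T x) ^ 2) x := by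
    intro x hx
    have h1 : HasDerivAt (fun x => 1 + lam * T x) (lam * T' x) x := by
      simpa using (((hT x).const_mul lam).const_add 1)
    have h2 := h1.inv (ne_of_gt hx)
    have h3 := h2.const_sub 1
    have e : lam * T' x / (1 + lam * T x) ^ 2 = -(-(lam * T' x) / (1 + lam * T x) ^ 2) := by ring
    have hf : (fun x => 1 - 1 / (1 + lam * T x)) = fun y => 1 - (fun x => 1 + lam * T x)⁻¹ y := by
      funext y; simp [one_div]
    rw [e, hf]; exact h3
  have hev : (fun x => deriv (fun x => 1 - 1 / (1 + lam * T x)) x)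
      =ᶠ[nhds C] fun x => lam * T' x / (1 + lam * T x) ^ 2 := by
    filter_upwards [hmem] with x hx
    exact (hderiv1 x hx).deriv
  rw [hev.deriv_eq]
  have hn : HasDerivAt (fun x => lam * T' x) (lam * T'' C) C := (hT' C).const_mul lam
  have hd : HasDerivAt (fun x => (1 + lam * T x) ^ 2)
      (2 * (1 + lam * T C) * (lam * T' C)) C := by
    have h1 : HasDerivAt (fun x => 1 + lam * T x) (lam * T' C) C := by
      simpa using (((hT C).const_mul lam).const_add 1)
    have h2 := h1.pow 2
    have e : 2 * (1 + lam * T C) * (lam * T' C) = lam * (T' C * ((1 + lam * T C) * 2)) := by ring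
    rw [e]; exact h2.congr_deriv (by push_cast; ring)
  have hq : HasDerivAt (fun x => lam * T' x / (1 + lam * T x) ^ 2) _ C :=
    hn.div hd (pow_ne_zero 2 (ne_of_gt hD))
  rw [hq.deriv]
  have hD' : (1 + lam * T C) ≠ 0 := ne_of_gt hD
  field_simp
where
  fun_prop_aux (T : ℝ → ℝ) (h : ∀ x, HasDerivAt T (T' x) x) : Continuous T := by
    have : Differentiable ℝ T := fun x => (h x).differentiableAt
    exact this.continuous

theorem fifo_concavity_ordering (T T' T'' : ℝ → ℝ)
    (hT : ∀ x, HasDerivAt T (T' x) x)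
    (hT' : ∀ x, HasDerivAt T' (T'' x) x)
    (hT'nonneg : ∀ x, 0 ≤ T' x)
    (hT''nonneg : ∀ x, 0 ≤ T'' x)
    (hTnonneg : ∀ x, 0 ≤ x → 0 ≤ T x)
    (lami lamj : ℝ) (hlamj : 0 < lamj) (hle : lamj ≤ lami)
    (C : ℝ) (hC : 0 ≤ C)
    (hj : deriv (deriv (fun x => 1 - 1 / (1 + lamj * T x))) C < 0) :
    deriv (deriv (fun x => 1 - 1 / (1 + lami * T x))) C < 0 := by
  have ht : 0 ≤ T C := hTnonneg C hC
  have hlami : 0 < lami := lt_of_lt_of_le hlamj hle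
  have hDj : 0 < 1 + lamj * T C := by positivity
  have hDi : 0 < 1 + lami * T C := by positivity
  rw [fifo_second_deriv T T' T'' hT hT' lamj C hDj] at hj
  rw [fifo_second_deriv T T' T'' hT hT' lami C hDi]
  set t := T C
  set a := T' C
  set b := T'' C
  have ha : 0 ≤ a := hT'nonneg C
  have hb : 0 ≤ b := hT''nonneg C
  have key : ∀ lam : ℝ, (1 + lam * t) ≠ 0 →
      lam * b / (1 + lam * t) ^ 2 - 2 * lam ^ 2 * a ^ 2 / (1 + lam * t) ^ 3
        = (lam * b * (1 + lam * t) - 2 * lam ^ 2 * a ^ 2) / (1 + lam * t) ^ 3 := by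
    intro lam h
    field_simp
  rw [key lamj (ne_of_gt hDj), div_lt_iff₀ (by positivity)] at hj
  rw [key lami (ne_of_gt hDi), div_lt_iff₀ (by positivity)]
  simp only [zero_mul] at hj ⊢
  -- hj : lamj * b * (1 + lamj * t) < 2 * lamj ^ 2 * a ^ 2
  -- b * (1 + lamj * t) < 2 * lamj * a ^ 2, and lamj * (1 + lami*t) ≤ lami * (1 + lamj*t)
  by_contra hgoal
  push_neg at hgoal
  -- divide hj by lamj and hgoal by lami
  have h1 : b * (1 + lamj * t) < 2 * lamj * a ^ 2 :=
    lt_of_mul_lt_mul_left (by nlinarith) hlamj.le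
  have h2 : 2 * lami * a ^ 2 ≤ b * (1 + lami * t) :=
    le_of_mul_le_mul_left (by nlinarith) hlami
  have h3 : lamj * (b * (1 + lami * t)) ≤ lami * (b * (1 + lamj * t)) := by
    nlinarith [mul_nonneg hb (sub_nonneg.mpr hle)]
  have h4 := mul_le_mul_of_nonneg_left h2 hlamj.le
  have h5 := mul_lt_mul_of_pos_left h1 hlami
  nlinarith [h3, h4, h5, mul_pos hlamj hlami]
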